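/- Let ℓ ≥ 3 be an integer. The additive monoid U^(0)_0 (a submonoid of (Fin N → ℤ) × ℤ under pointwise addition) is a free commutative monoid on the 2ℓ+1 generators (μ_0, 1), …, (μ_{2ℓ}, 1): the map (Fin (2ℓ+1) → ℕ) → U^(0)_0 sending (c_0, …, c_{2ℓ}) to Σ_i c_i·(μ_i, 1) is an isomorphism of additive monoids. (Hence the Ehrhart ring of the face {f ∈ STAB(G) : f⁺(V) = ℓ} is isomorphic to a polynomial ring in 2ℓ+1 variables with the standard grading.) -/

import Mathlib

/-- `(μ, d)` belongs to `U^(n)` for the cycle of length `2ℓ+1`. -/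
def inU (ℓ : ℕ) (n : ℤ) (μ : Fin (2 * ℓ + 1) → ℤ) (d : ℤ) : Prop :=
  (∀ i, n ≤ μ i) ∧
  (∀ i : Fin (2 * ℓ + 1), μ i + μ (i + 1) ≤ d - n) ∧
  (∑ i, μ i ≤ (ℓ : ℤ) * d - n)

/-- The exponent vector `μ_i`: `μ_i(j) = 1` iff `(j - i) mod (2ℓ+1)` lies in
`{0, 2, 4, …, 2ℓ-2}`, i.e. is even and different from `2ℓ`. -/
def muV (ℓ : ℕ) (i : Fin (2 * ℓ + 1)) : Fin (2 * ℓ + 1) → ℤ := fun j =>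
  if (((j : ℤ) - (i : ℤ)) % (2 * (ℓ : ℤ) + 1)) % 2 = 0 ∧
     ((j : ℤ) - (i : ℤ)) % (2 * (ℓ : ℤ) + 1) ≠ 2 * (ℓ : ℤ)
  then 1 else 0

/-- The monoid `U^(0)_0` as a subset of `(Fin (2ℓ+1) → ℤ) × ℤ`. -/
def U00 (ℓ : ℕ) : Set ((Fin (2 * ℓ + 1) → ℤ) × ℤ) :=
  {p | inU ℓ 0 p.1 p.2 ∧ ∑ i, p.1 i = (ℓ : ℤ) * p.2}

namespace Stmt10

/-- helper indicator -/
def g (ℓ a : ℕ) : ℤ := if a % 2 = 0 ∧ a ≠ 2 * ℓ then 1 else 0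

lemma g_nonneg {ℓ a : ℕ} : 0 ≤ g ℓ a := by unfold g; split <;> norm_num

lemma mod_small (a n : ℕ) (h : a < 2 * n) : a % n = if a < n then a else a - n := by
  split_ifs with h'
  · exact Nat.mod_eq_of_lt h'
  · rw [Nat.mod_eq_sub_mod (le_of_not_gt h'), Nat.mod_eq_of_lt (by omega)]

lemma muV_eq_g {ℓ : ℕ} (i j : Fin (2 * ℓ + 1)) : muV ℓ i j = g ℓ ((j - i).val) := by
  have hi : (i : ℕ) < 2 * ℓ + 1 := i.isLt
  have key : ((j : ℤ) - (i : ℤ)) % (2 * (ℓ : ℤ) + 1) = ((j - i : Fin (2 * ℓ + 1)).val : ℤ) := by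
    rw [Fin.sub_def]
    have h1 : ((2 * ℓ + 1 - (i : ℕ) + (j : ℕ) : ℕ) : ℤ)
        = (j : ℤ) - (i : ℤ) + (2 * (ℓ : ℤ) + 1) * 1 := by
      push_cast [Nat.cast_sub hi.le]; ring
    calc ((j : ℤ) - (i : ℤ)) % (2 * (ℓ : ℤ) + 1)
        = ((j : ℤ) - (i : ℤ) + (2 * (ℓ : ℤ) + 1) * 1) % (2 * (ℓ : ℤ) + 1) := by
          rw [Int.add_mul_emod_self_left]
      _ = ((2 * ℓ + 1 - (i : ℕ) + (j : ℕ) : ℕ) : ℤ) % ((2 * ℓ + 1 : ℕ) : ℤ) := by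
          rw [h1]; push_cast; ring_nf
      _ = (((2 * ℓ + 1 - (i : ℕ) + (j : ℕ)) % (2 * ℓ + 1) : ℕ) : ℤ) := by
          rw [Int.natCast_mod]
      _ = _ := rfl
  unfold muV g
  rw [key]
  split_ifs with h1 h2 <;> first | rfl | (exfalso; omega)

/-- the element `2` of `Fin (2ℓ+1)`. -/
def tw (ℓ : ℕ) : Fin (2 * ℓ + 1) := 1 + 1

lemma val_one' {ℓ : ℕ} (hℓ : 3 ≤ ℓ) : ((1 : Fin (2 * ℓ + 1)) : ℕ) = 1 := by
  rw [Fin.val_one']; exact Nat.mod_eq_of_lt (by omega)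

lemma val_tw {ℓ : ℕ} (hℓ : 3 ≤ ℓ) : ((tw ℓ : Fin (2 * ℓ + 1)) : ℕ) = 2 := by
  unfold tw
  rw [Fin.add_def, val_one' hℓ]
  exact Nat.mod_eq_of_lt (by omega)

lemma g_pair {ℓ : ℕ} (hℓ : 3 ≤ ℓ) (u : Fin (2 * ℓ + 1)) :
    g ℓ u.val + g ℓ ((u + 1) : Fin (2 * ℓ + 1)).val = if u.val = 2 * ℓ - 1 then 0 else 1 := by
  have hu : (u : ℕ) < 2 * ℓ + 1 := u.isLt
  have h1 : ((u + 1 : Fin (2 * ℓ + 1)) : ℕ) = ((u : ℕ) + 1) % (2 * ℓ + 1) := by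
    rw [Fin.add_def, val_one' hℓ]
  rw [h1, mod_small _ _ (by omega)]
  unfold g
  split_ifs <;> omega

lemma sub_val_iff {ℓ : ℕ} (hℓ : 3 ≤ ℓ) (i j : Fin (2 * ℓ + 1)) :
    ((j - i).val = 2 * ℓ - 1) ↔ i = j + tw ℓ := by
  have hi : (i : ℕ) < 2 * ℓ + 1 := i.isLt
  have hj : (j : ℕ) < 2 * ℓ + 1 := j.isLt
  rw [Fin.ext_iff, Fin.sub_def, Fin.add_def, val_tw hℓ]
  simp only
  rw [mod_small (2 * ℓ + 1 - (i : ℕ) + (j : ℕ)) (2 * ℓ + 1) (by omega),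
    mod_small ((j : ℕ) + 2) (2 * ℓ + 1) (by omega)]
  split_ifs <;> omega

/-- pair lemma at the `muV` level -/
lemma muV_pair {ℓ : ℕ} (hℓ : 3 ≤ ℓ) (i j : Fin (2 * ℓ + 1)) :
    muV ℓ i j + muV ℓ i (j + 1) = if i = j + tw ℓ then 0 else 1 := by
  haveI : NeZero (2 * ℓ + 1) := ⟨by omega⟩
  rw [muV_eq_g, muV_eq_g, show j + 1 - i = (j - i) + 1 by abel, g_pair hℓ (j - i)]
  simp only [sub_val_iff hℓ]

lemma sum_even (n : ℕ) :
    (∑ a ∈ Finset.range (2 * n + 1), if a % 2 = 0 then (1 : ℤ) else 0) = n + 1 := by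
  induction n with
  | zero => rfl
  | succ m ih =>
    rw [show 2 * (m + 1) + 1 = (2 * m + 1) + 1 + 1 by ring, Finset.sum_range_succ,
      Finset.sum_range_succ, ih]
    have h1 : (2 * m + 1) % 2 = 1 := by omega
    have h2 : (2 * m + 1 + 1) % 2 = 0 := by omega
    rw [h1, h2]
    push_cast
    ring_nf

lemma sum_g {ℓ : ℕ} : (∑ a ∈ Finset.range (2 * ℓ + 1), g ℓ a) = (ℓ : ℤ) := by
  have h : ∀ a ∈ Finset.range (2 * ℓ + 1),
      g ℓ a = (if a % 2 = 0 then (1 : ℤ) else 0) - (if a = 2 * ℓ then 1 else 0) := by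
    intro a _
    unfold g
    split_ifs <;> omega
  rw [Finset.sum_congr rfl h, Finset.sum_sub_distrib, sum_even,
    Finset.sum_ite_eq' (Finset.range (2 * ℓ + 1)) (2 * ℓ) (fun _ => (1 : ℤ))]
  simp

lemma muV_row {ℓ : ℕ} (j : Fin (2 * ℓ + 1)) : ∑ i, muV ℓ i j = (ℓ : ℤ) := by
  simp_rw [muV_eq_g]
  calc ∑ i, g ℓ ((j - i).val)
      = ∑ u : Fin (2 * ℓ + 1), g ℓ u.val := Equiv.sum_comp (Equiv.subLeft j) (fun u => g ℓ u.val)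
    _ = ∑ a ∈ Finset.range (2 * ℓ + 1), g ℓ a := Fin.sum_univ_eq_sum_range _ _
    _ = (ℓ : ℤ) := sum_g

lemma muV_col {ℓ : ℕ} (i : Fin (2 * ℓ + 1)) : ∑ j, muV ℓ i j = (ℓ : ℤ) := by
  simp_rw [muV_eq_g]
  calc ∑ j, g ℓ ((j - i).val)
      = ∑ u : Fin (2 * ℓ + 1), g ℓ u.val := Equiv.sum_comp (Equiv.subRight i) (fun u => g ℓ u.val)
    _ = ∑ a ∈ Finset.range (2 * ℓ + 1), g ℓ a := Fin.sum_univ_eq_sum_range _ _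
    _ = (ℓ : ℤ) := sum_g

/-- the forward map -/
def F (ℓ : ℕ) (c : Fin (2 * ℓ + 1) → ℕ) : (Fin (2 * ℓ + 1) → ℤ) × ℤ :=
  (fun j => ∑ i, (c i : ℤ) * muV ℓ i j, ∑ i, (c i : ℤ))

lemma K1 {ℓ : ℕ} (hℓ : 3 ≤ ℓ) (c : Fin (2 * ℓ + 1) → ℕ) (j : Fin (2 * ℓ + 1)) :
    (∑ i, (c i : ℤ) * muV ℓ i j) + (∑ i, (c i : ℤ) * muV ℓ i (j + 1))
      = (∑ i, (c i : ℤ)) - c (j + tw ℓ) := by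
  rw [← Finset.sum_add_distrib]
  simp_rw [← mul_add, muV_pair hℓ]
  have h : ∀ i : Fin (2 * ℓ + 1), (c i : ℤ) * (if i = j + tw ℓ then 0 else 1)
      = (c i : ℤ) - (if i = j + tw ℓ then (c i : ℤ) else 0) := by
    intro i; split_ifs <;> ring
  simp_rw [h]
  rw [Finset.sum_sub_distrib,
    Finset.sum_ite_eq' Finset.univ (j + tw ℓ) (fun i => (c i : ℤ))]
  simp

lemma sumF {ℓ : ℕ} (c : Fin (2 * ℓ + 1) → ℕ) :
    ∑ j, (∑ i, (c i : ℤ) * muV ℓ i j) = (ℓ : ℤ) * ∑ i, (c i : ℤ) := by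
  rw [Finset.sum_comm]
  simp_rw [← Finset.mul_sum, muV_col]
  rw [← Finset.sum_mul]
  ring

lemma memU {ℓ : ℕ} (hℓ : 3 ≤ ℓ) (c : Fin (2 * ℓ + 1) → ℕ) : F ℓ c ∈ U00 ℓ := by
  refine ⟨⟨?_, ?_, ?_⟩, ?_⟩
  · intro j
    show (0 : ℤ) ≤ ∑ i, (c i : ℤ) * muV ℓ i j
    apply Finset.sum_nonneg
    intro k _
    apply mul_nonneg
    · positivity
    · rw [muV_eq_g]; exact g_nonneg
  · intro j
    have h := K1 hℓ c j
    have hc : (0 : ℤ) ≤ c (j + tw ℓ) := by positivity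
    show (∑ i, (c i : ℤ) * muV ℓ i j) + (∑ i, (c i : ℤ) * muV ℓ i (j + 1))
      ≤ (∑ i, (c i : ℤ)) - 0
    omega
  · show ∑ j, (∑ i, (c i : ℤ) * muV ℓ i j) ≤ (ℓ : ℤ) * (∑ i, (c i : ℤ)) - 0
    rw [sumF c]; omega
  · show ∑ j, (∑ i, (c i : ℤ) * muV ℓ i j) = (ℓ : ℤ) * (∑ i, (c i : ℤ))
    exact sumF c

/-- the inverse map -/
def G (ℓ : ℕ) (p : (Fin (2 * ℓ + 1) → ℤ) × ℤ) : Fin (2 * ℓ + 1) → ℕ :=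
  fun i => (p.2 - p.1 (i - tw ℓ) - p.1 (i - tw ℓ + 1)).toNat

lemma left_inv {ℓ : ℕ} (hℓ : 3 ≤ ℓ) (c : Fin (2 * ℓ + 1) → ℕ) : G ℓ (F ℓ c) = c := by
  haveI : NeZero (2 * ℓ + 1) := ⟨by omega⟩
  funext i
  have h := K1 hℓ c (i - tw ℓ)
  rw [show i - tw ℓ + tw ℓ = i by abel] at h
  show ((∑ i', (c i' : ℤ)) - (∑ i', (c i' : ℤ) * muV ℓ i' (i - tw ℓ))
      - (∑ i', (c i' : ℤ) * muV ℓ i' (i - tw ℓ + 1))).toNat = c i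
  have h2 : (∑ i', (c i' : ℤ)) - (∑ i', (c i' : ℤ) * muV ℓ i' (i - tw ℓ))
      - (∑ i', (c i' : ℤ) * muV ℓ i' (i - tw ℓ + 1)) = (c i : ℤ) := by linarith
  rw [h2, Int.toNat_natCast]

lemma right_inv {ℓ : ℕ} (hℓ : 3 ≤ ℓ) (p : (Fin (2 * ℓ + 1) → ℤ) × ℤ) (hp : p ∈ U00 ℓ) :
    F ℓ (G ℓ p) = p := by
  haveI : NeZero (2 * ℓ + 1) := ⟨by omega⟩
  obtain ⟨μ, d⟩ := p
  obtain ⟨⟨h0, h1, _⟩, h3⟩ := hp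
  simp only [] at h0 h1 h3
  have hc : ∀ i, ((G ℓ (μ, d) i : ℕ) : ℤ) = d - μ (i - tw ℓ) - μ (i - tw ℓ + 1) := by
    intro i
    have h := h1 (i - tw ℓ)
    show ((d - μ (i - tw ℓ) - μ (i - tw ℓ + 1)).toNat : ℤ) = _
    rw [Int.toNat_of_nonneg (by omega)]
  have r1 : ∑ i, μ (i - tw ℓ) = ∑ i, μ i := Equiv.sum_comp (Equiv.subRight (tw ℓ)) μ
  have r2 : ∑ i, μ (i - tw ℓ + 1) = ∑ i, μ i := by
    calc ∑ i, μ (i - tw ℓ + 1) = ∑ i, μ (i - (tw ℓ - 1)) := by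
          apply Finset.sum_congr rfl; intro i _; congr 1; abel
      _ = ∑ i, μ i := Equiv.sum_comp (Equiv.subRight (tw ℓ - 1)) μ
  have hsum : ∑ i, ((G ℓ (μ, d) i : ℕ) : ℤ) = d := by
    simp_rw [hc]
    rw [Finset.sum_sub_distrib, Finset.sum_sub_distrib, r1, r2, h3, Finset.sum_const,
      Finset.card_univ, Fintype.card_fin, nsmul_eq_mul]
    push_cast
    ring
  have hfst : ∀ j, ∑ i, ((G ℓ (μ, d) i : ℕ) : ℤ) * muV ℓ i j = μ j := by
    intro j
    simp_rw [hc, sub_mul]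
    rw [Finset.sum_sub_distrib, Finset.sum_sub_distrib, ← Finset.mul_sum, muV_row]
    have s1 : ∑ i, μ (i - tw ℓ) * muV ℓ i j
        = ∑ k, μ k * muV ℓ (k + tw ℓ) j := by
      rw [← Equiv.sum_comp (Equiv.addRight (tw ℓ))
        (fun i => μ (i - tw ℓ) * muV ℓ i j)]
      apply Finset.sum_congr rfl; intro k _
      simp only [Equiv.coe_addRight]
      rw [show k + tw ℓ - tw ℓ = k by abel]
    have s2 : ∑ i, μ (i - tw ℓ + 1) * muV ℓ i j
        = ∑ k, μ k * muV ℓ (k + tw ℓ) (j + 1) := by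
      rw [← Equiv.sum_comp (Equiv.addRight (tw ℓ - 1))
        (fun i => μ (i - tw ℓ + 1) * muV ℓ i j)]
      apply Finset.sum_congr rfl; intro k _
      simp only [Equiv.coe_addRight]
      rw [show k + (tw ℓ - 1) - tw ℓ + 1 = k by abel]
      congr 1
      rw [muV_eq_g, muV_eq_g]
      congr 1
      rw [show j - (k + (tw ℓ - 1)) = j + 1 - (k + tw ℓ) by abel]
    rw [s1, s2]
    have key : ∀ k : Fin (2 * ℓ + 1),
        μ k * muV ℓ (k + tw ℓ) j + μ k * muV ℓ (k + tw ℓ) (j + 1)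
          = μ k - (if k = j then μ k else 0) := by
      intro k
      rw [← mul_add, muV_pair hℓ]
      simp only [add_left_inj]
      split_ifs <;> ring
    have : (∑ k, μ k * muV ℓ (k + tw ℓ) j) + (∑ k, μ k * muV ℓ (k + tw ℓ) (j + 1))
        = (ℓ : ℤ) * d - μ j := by
      rw [← Finset.sum_add_distrib]
      simp_rw [key]
      rw [Finset.sum_sub_distrib, Finset.sum_ite_eq' Finset.univ j μ, h3]
      simp
    linarith
  unfold F
  refine Prod.ext ?_ ?_
  · funext j; exact hfst j
  · exact hsum

end Stmt10

theorem stmt_10 (ℓ : ℕ) (hℓ : 3 ≤ ℓ) :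
    ∃ e : (Fin (2 * ℓ + 1) → ℕ) ≃ U00 ℓ,
      (∀ c, (e c : (Fin (2 * ℓ + 1) → ℤ) × ℤ) =
        (fun j => ∑ i, (c i : ℤ) * muV ℓ i j, ∑ i, (c i : ℤ))) ∧
      (∀ c c', ((e (c + c') : (Fin (2 * ℓ + 1) → ℤ) × ℤ)) =
        (e c : (Fin (2 * ℓ + 1) → ℤ) × ℤ) + (e c' : (Fin (2 * ℓ + 1) → ℤ) × ℤ)) := by
  haveI : NeZero (2 * ℓ + 1) := ⟨by omega⟩
  refine ⟨{ toFun := fun c => ⟨Stmt10.F ℓ c, Stmt10.memU hℓ c⟩,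
            invFun := fun p => Stmt10.G ℓ (p : (Fin (2 * ℓ + 1) → ℤ) × ℤ),
            left_inv := fun c => Stmt10.left_inv hℓ c,
            right_inv := fun p => Subtype.ext (Stmt10.right_inv hℓ (p : (Fin (2 * ℓ + 1) → ℤ) × ℤ) p.2) }, ?_, ?_⟩
  · intro c; rfl
  · intro c c'
    show Stmt10.F ℓ (c + c') = Stmt10.F ℓ c + Stmt10.F ℓ c'
    unfold Stmt10.F
    refine Prod.ext ?_ ?_
    · funext j
      show (∑ i, ((c + c') i : ℤ) * muV ℓ i j)
        = (∑ i, (c i : ℤ) * muV ℓ i j) + (∑ i, (c' i : ℤ) * muV ℓ i j)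
      rw [← Finset.sum_add_distrib]
      apply Finset.sum_congr rfl
      intro i _
      show (((c i + c' i : ℕ)) : ℤ) * muV ℓ i j = _
      push_cast
      ring
    · show (∑ i, ((c + c') i : ℤ)) = (∑ i, (c i : ℤ)) + (∑ i, (c' i : ℤ))
      rw [← Finset.sum_add_distrib]
      apply Finset.sum_congr rfl
      intro i _
      show (((c i + c' i : ℕ)) : ℤ) = _
      push_cast
      ring
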